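/- Let D = (V,A) be a digraph. Then, as polynomials in y and z, Σ y^{|S|} z^{|T|} = (−1)^{|V|} · B_D(−1, 1+y, 1+z), where the sum is over all ordered partitions A = R ⊎ S ⊎ T into three disjoint (possibly empty) sets such that the digraph obtained from D by deleting the arcs in R and reversing the source and target of each arc in T is acyclic, and B_D(−1, 1+y, 1+z) denotes the evaluation of the B-polynomial of D at q = −1. -/

import Mathlib

open Finset

/-- The sum over all `q`-colorings of a digraph of
`y ^ (number of ascents) * z ^ (number of descents)`. -/
def colorSum (V A : Type) [Fintype V] [DecidableEq V] [Fintype A]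
    (s t : A → V) (q : ℕ) (y z : ℚ) : ℚ :=
  ∑ f : V → Fin q,
    y ^ (Finset.univ.filter (fun a => f (s a) < f (t a))).card *
    z ^ (Finset.univ.filter (fun a => f (t a) < f (s a))).card

/-- A digraph (arcs `A`, source map `s`, target map `t`) contains a directed cycle. -/
def HasDicycle {V A : Type} (s t : A → V) : Prop :=
  ∃ n : ℕ, 0 < n ∧ ∃ c : ZMod n → A, ∀ i, t (c i) = s (c (i + 1))

open scoped Classical

namespace B10

variable {W B : Type} [Fintype W] [DecidableEq W] [Fintype B]

noncomputable def strictSet (σ τ : B → W) (q : ℕ) : Finset (W → Fin q) :=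
  univ.filter (fun f => ∀ b, f (σ b) < f (τ b))

noncomputable def surjCount (σ τ : B → W) (k : ℕ) : ℕ :=
  ((strictSet σ τ k).filter (fun f => Function.Surjective f)).card

theorem strictSet_eq_empty_of_dicycle {σ τ : B → W} (h : HasDicycle σ τ) (q : ℕ) :
    strictSet σ τ q = ∅ := by
  obtain ⟨n, hn, c, hc⟩ := h
  haveI : NeZero n := ⟨hn.ne'⟩
  rw [eq_empty_iff_forall_notMem]
  intro f hf
  rw [strictSet, mem_filter] at hf
  obtain ⟨i0, -, hmax⟩ := Finset.exists_max_image (univ : Finset (ZMod n))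
    (fun i => f (σ (c i))) ⟨0, mem_univ _⟩
  have h1 : f (σ (c i0)) < f (τ (c i0)) := hf.2 _
  rw [hc i0] at h1
  exact absurd (hmax _ (mem_univ _)) (not_le.mpr h1)

/-- In an acyclic digraph with a nonempty vertex set, some vertex has no outgoing arc. -/
theorem exists_sink {σ τ : B → W} (h : ¬ HasDicycle σ τ) (hW : Nonempty W) :
    ∃ w : W, ∀ b, σ b ≠ w := by
  by_contra hc
  push_neg at hc
  choose φ hφ using hc
  obtain ⟨w0⟩ := hW
  let v : ℕ → W := fun i => (fun x => τ (φ x))^[i] w0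
  have hv : ∀ i, v (i+1) = τ (φ (v i)) := fun i => Function.iterate_succ_apply' _ _ _
  obtain ⟨i, j, hne, hij⟩ := Finite.exists_ne_map_eq_of_infinite v
  wlog hlt : i < j generalizing i j
  · exact this j i (Ne.symm hne) hij.symm (by omega)
  set m := j - i with hm
  have hm0 : 0 < m := by omega
  haveI : NeZero m := ⟨hm0.ne'⟩
  apply h
  refine ⟨m, hm0, fun x => φ (v (i + x.val)), fun x => ?_⟩
  have hval : (x + 1 : ZMod m).val = (x.val + 1) % m := by
    rw [ZMod.val_add, ZMod.val_one_eq_one_mod, Nat.add_mod_mod]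
  have hxv : x.val < m := ZMod.val_lt x
  simp only [hφ]
  have goal' : v (i + x.val + 1) = v (i + (x + 1 : ZMod m).val) := by
    rcases Nat.lt_or_ge (x.val + 1) m with hlt' | hge
    · rw [hval, Nat.mod_eq_of_lt hlt']
      ring_nf
    · have hxm : x.val + 1 = m := by omega
      rw [hval, hxm, Nat.mod_self]
      have : i + x.val + 1 = j := by omega
      rw [this, ← hij, Nat.add_zero]
  rw [← goal', hv]

theorem not_dicycle_res {σ τ : B → W} (h : ¬ HasDicycle σ τ) (U : Finset W) :
    ¬ HasDicycle
      (fun b : {b : B // σ b ∉ U ∧ τ b ∉ U} => (⟨σ b.1, b.2.1⟩ : {w : W // w ∉ U}))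
      (fun b => ⟨τ b.1, b.2.2⟩) := by
  rintro ⟨n, hn, c, hc⟩
  exact h ⟨n, hn, fun i => (c i).1, fun i => congrArg Subtype.val (hc i)⟩

theorem surjCount_eq_zero {σ τ : B → W} {k : ℕ} (h : Fintype.card W < k) :
    surjCount σ τ k = 0 := by
  rw [surjCount, Finset.card_eq_zero, eq_empty_iff_forall_notMem]
  intro f hf
  rw [mem_filter] at hf
  have := Fintype.card_le_of_surjective f hf.2
  rw [Fintype.card_fin] at this
  omega

theorem surjCount_zero_of_isEmpty [IsEmpty W] (σ τ : B → W) : surjCount σ τ 0 = 1 := by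
  haveI : IsEmpty B := ⟨fun b => IsEmpty.false (σ b)⟩
  have h1 : ((strictSet σ τ 0).filter (fun f => Function.Surjective f)) = univ := by
    ext f
    simp only [mem_filter, mem_univ, strictSet, true_and, iff_true]
    exact ⟨fun b => (IsEmpty.false b).elim, fun y => (IsEmpty.false y).elim⟩
  rw [surjCount, h1, Finset.card_univ, Fintype.card_unique]

theorem surjCount_zero_of_nonempty [Nonempty W] (σ τ : B → W) : surjCount σ τ 0 = 0 := by
  haveI : IsEmpty (W → Fin 0) := ⟨fun f => IsEmpty.false (f (Classical.arbitrary W))⟩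
  rw [surjCount, Finset.card_eq_zero]
  exact Finset.eq_empty_of_isEmpty _

theorem surjCount_succ (σ τ : B → W) (k : ℕ) :
    surjCount σ τ (k+1) =
      ∑ U ∈ univ.filter (fun U : Finset W => U.Nonempty ∧ ∀ b, σ b ∉ U),
        surjCount
          (fun b : {b : B // σ b ∉ U ∧ τ b ∉ U} => (⟨σ b.1, b.2.1⟩ : {w : W // w ∉ U}))
          (fun b => ⟨τ b.1, b.2.2⟩) k := by
  rw [surjCount]
  rw [Finset.card_eq_sum_card_fiberwise
    (f := fun f : W → Fin (k+1) => univ.filter (fun w => f w = Fin.last k))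
    (t := univ.filter (fun U : Finset W => U.Nonempty ∧ ∀ b, σ b ∉ U)) ?memt]
  case memt =>
    intro f hf
    rw [Finset.mem_coe, strictSet, mem_filter, mem_filter] at hf
    obtain ⟨⟨-, hstrict⟩, hsurj⟩ := hf
    rw [Finset.mem_coe, mem_filter]
    refine ⟨mem_univ _, ?_, ?_⟩
    · obtain ⟨w, hw⟩ := hsurj (Fin.last k)
      exact ⟨w, mem_filter.mpr ⟨mem_univ _, hw⟩⟩
    · intro b hb
      rw [mem_filter] at hb
      have h1 := hstrict b
      rw [hb.2] at h1
      exact absurd (Fin.le_last (f (τ b))) (not_le.mpr h1)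
  refine Finset.sum_congr rfl (fun U hU => ?_)
  rw [mem_filter] at hU
  obtain ⟨-, hUne, hUsink⟩ := hU
  rw [surjCount]
  refine Finset.card_bij'
    (i := fun f hf => fun w : {w : W // w ∉ U} => (f w.1).castLT ?_)
    (j := fun f' hf' => fun w : W => if h : w ∈ U then Fin.last k else (f' ⟨w, h⟩).castSucc)
    ?_ ?_ ?_ ?_
  case refine_1 =>
    -- (f w.1).val < k
    rw [mem_filter, mem_filter, strictSet, mem_filter] at hf
    have h2 : f w.1 ≠ Fin.last k := by
      intro hl
      have hmem : ↑w ∈ filter (fun w => f w = Fin.last k) univ :=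
        mem_filter.mpr ⟨mem_univ _, hl⟩
      rw [hf.2] at hmem
      exact w.2 hmem
    have := Fin.lt_last_iff_ne_last.mpr h2
    omega
  case refine_2 =>
    -- forward lands in target
    intro f hf
    rw [mem_filter, mem_filter, strictSet, mem_filter] at hf
    obtain ⟨⟨⟨-, hstrict⟩, hsurj⟩, hfib⟩ := hf
    rw [mem_filter, strictSet, mem_filter]
    refine ⟨⟨mem_univ _, ?_⟩, ?_⟩
    · rintro ⟨b, hb1, hb2⟩
      simp only [Fin.lt_def, Fin.coe_castLT]
      exact hstrict b
    · intro j
      obtain ⟨w, hw⟩ := hsurj j.castSucc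
      have hwU : w ∉ U := by
        intro hmem
        rw [← hfib, mem_filter, hw] at hmem
        exact (Fin.castSucc_lt_last j).ne hmem.2
      refine ⟨⟨w, hwU⟩, ?_⟩
      apply Fin.ext
      simp [hw]
  case refine_3 =>
    -- backward lands in source
    intro f' hf'
    rw [mem_filter, strictSet, mem_filter] at hf'
    obtain ⟨⟨-, hstrict⟩, hsurj⟩ := hf'
    rw [mem_filter, mem_filter, strictSet, mem_filter]
    have hσ : ∀ b, σ b ∉ U := hUsink
    refine ⟨⟨⟨mem_univ _, ?_⟩, ?_⟩, ?_⟩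
    · intro b
      simp only [dif_neg (hσ b)]
      by_cases hτ : τ b ∈ U
      · simp only [dif_pos hτ]
        exact Fin.castSucc_lt_last _
      · simp only [dif_neg hτ]
        exact Fin.castSucc_lt_castSucc_iff.mpr (hstrict ⟨b, hσ b, hτ⟩)
    · intro y
      by_cases hy : y = Fin.last k
      · obtain ⟨u, hu⟩ := hUne
        refine ⟨u, ?_⟩
        simp only [dif_pos hu, hy]
      · obtain ⟨j, hj⟩ := Fin.exists_castSucc_eq.mpr hy
        obtain ⟨w, hw⟩ := hsurj j
        refine ⟨w.1, ?_⟩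
        simp only [dif_neg w.2, Subtype.coe_eta, hw, hj]
    · ext w
      rw [mem_filter]
      constructor
      · rintro ⟨-, hw⟩
        by_contra hwU
        simp only [dif_neg hwU] at hw
        exact (Fin.castSucc_lt_last _).ne hw
      · intro hwU
        refine ⟨mem_univ _, ?_⟩
        simp only [dif_pos hwU]
  case refine_4 =>
    -- left inverse
    intro f hf
    rw [mem_filter, mem_filter, strictSet, mem_filter] at hf
    funext w
    by_cases hw : w ∈ U
    · simp only [dif_pos hw]
      have hmem : w ∈ filter (fun w => f w = Fin.last k) univ := by
        rw [hf.2]; exact hw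
      exact ((mem_filter.mp hmem).2).symm
    · simp only [dif_neg hw]
      exact Fin.castSucc_castLT _ _
  case refine_5 =>
    -- right inverse
    intro f' hf'
    funext w
    apply Fin.ext
    simp [dif_neg w.2]

theorem alternating_sum :
    ∀ (n : ℕ) (W B : Type) [Fintype W] [DecidableEq W] [Fintype B] (σ τ : B → W),
      Fintype.card W = n → ¬ HasDicycle σ τ →
      ∑ k ∈ Finset.range (n+1), (-1:ℚ)^k * surjCount σ τ k = (-1)^n := by
  intro n
  induction n using Nat.strong_induction_on with
  | _ n IH =>
    intro W B _ _ _ σ τ hcard hacyc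
    rcases n with _ | m
    · haveI : IsEmpty W := Fintype.card_eq_zero_iff.mp hcard
      rw [Finset.sum_range_one, surjCount_zero_of_isEmpty]
      norm_num
    · haveI : Nonempty W := Fintype.card_pos_iff.mp (by omega)
      rw [Finset.sum_range_succ', surjCount_zero_of_nonempty σ τ]
      simp only [Nat.cast_zero, mul_zero, add_zero, pow_zero]
      -- now the sum over k of (-1)^(k+1) * surjCount (k+1)
      have hrec : ∀ k, (surjCount σ τ (k+1) : ℚ) =
          ∑ U ∈ univ.filter (fun U : Finset W => U.Nonempty ∧ ∀ b, σ b ∉ U),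
            (surjCount
              (fun b : {b : B // σ b ∉ U ∧ τ b ∉ U} => (⟨σ b.1, b.2.1⟩ : {w : W // w ∉ U}))
              (fun b => ⟨τ b.1, b.2.2⟩) k : ℚ) := by
        intro k
        rw [surjCount_succ]
        push_cast
        rfl
      simp only [hrec, Finset.mul_sum]
      rw [Finset.sum_comm]
      -- inner sums via IH
      have hinner : ∀ U ∈ univ.filter (fun U : Finset W => U.Nonempty ∧ ∀ b, σ b ∉ U),
          ∑ k ∈ Finset.range (m+1), (-1:ℚ)^(k+1) *
            (surjCount
              (fun b : {b : B // σ b ∉ U ∧ τ b ∉ U} => (⟨σ b.1, b.2.1⟩ : {w : W // w ∉ U}))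
              (fun b => ⟨τ b.1, b.2.2⟩) k : ℚ)
          = -((-1:ℚ)^(m+1) * (-1:ℚ)^(U.card)) := by
        intro U hU
        rw [mem_filter] at hU
        obtain ⟨-, hUne, hUsink⟩ := hU
        set σ' := (fun b : {b : B // σ b ∉ U ∧ τ b ∉ U} => (⟨σ b.1, b.2.1⟩ : {w : W // w ∉ U}))
        set τ' := (fun b : {b : B // σ b ∉ U ∧ τ b ∉ U} => (⟨τ b.1, b.2.2⟩ : {w : W // w ∉ U}))
        have hacyc' : ¬ HasDicycle σ' τ' := not_dicycle_res hacyc U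
        have hcardU : Fintype.card {w : W // w ∉ U} = Fintype.card W - U.card := by
          rw [Fintype.card_subtype_compl]
          congr 1
          exact Fintype.card_coe U
        have hUc1 : 1 ≤ U.card := Finset.card_pos.mpr hUne
        have hUcle : U.card ≤ m + 1 := by
          have := Finset.card_le_univ U
          rwa [hcard] at this
        set nU := Fintype.card {w : W // w ∉ U} with hnU
        have hnUm : nU ≤ m := by omega
        have hIH := IH nU (by omega) {w : W // w ∉ U} {b : B // σ b ∉ U ∧ τ b ∉ U}
          σ' τ' rfl hacyc'
        have hsplit : ∀ k, (-1:ℚ)^(k+1) * (surjCount σ' τ' k : ℚ)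
            = (-1) * ((-1:ℚ)^k * (surjCount σ' τ' k : ℚ)) := by
          intro k; ring
        rw [Finset.sum_congr rfl (fun k _ => hsplit k), ← Finset.mul_sum]
        have hext : ∑ k ∈ Finset.range (m+1), (-1:ℚ)^k * (surjCount σ' τ' k : ℚ)
            = ∑ k ∈ Finset.range (nU+1), (-1:ℚ)^k * (surjCount σ' τ' k : ℚ) := by
          rw [eq_comm]
          apply Finset.sum_subset (Finset.range_subset_range.mpr (by omega))
          intro k hk hk2
          rw [Finset.mem_range] at hk hk2
          rw [surjCount_eq_zero (by omega)]
          norm_num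
        rw [hext, hIH]
        have hpow : (-1:ℚ)^nU = (-1:ℚ)^(m+1) * (-1:ℚ)^(U.card) := by
          rw [← pow_add]
          have h2 : m + 1 + U.card = nU + 2 * U.card := by
            have : nU = m + 1 - U.card := by omega
            omega
          rw [h2, pow_add, pow_mul, neg_one_sq, one_pow, mul_one]
        rw [hpow]
        ring
      rw [Finset.sum_congr rfl hinner]
      -- ∑ over sink sets of (-1)^card = -1
      set Z := univ.filter (fun w : W => ∀ b, σ b ≠ w) with hZ
      have hZne : Z.Nonempty := by
        obtain ⟨w, hw⟩ := exists_sink hacyc ‹Nonempty W›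
        exact ⟨w, mem_filter.mpr ⟨mem_univ _, hw⟩⟩
      have hfilter : univ.filter (fun U : Finset W => U.Nonempty ∧ ∀ b, σ b ∉ U)
          = Z.powerset.erase ∅ := by
        ext U
        rw [mem_filter, Finset.mem_erase, Finset.mem_powerset]
        constructor
        · rintro ⟨-, hne, hsink⟩
          refine ⟨Finset.nonempty_iff_ne_empty.mp hne, fun w hw => ?_⟩
          rw [hZ, mem_filter]
          exact ⟨mem_univ _, fun b hb => hsink b (hb ▸ hw)⟩
        · rintro ⟨hne, hsub⟩
          refine ⟨mem_univ _, Finset.nonempty_iff_ne_empty.mpr hne, fun b hb => ?_⟩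
          have := hsub hb
          rw [hZ, mem_filter] at this
          exact this.2 b rfl
      have hsumZ : (∑ U ∈ Z.powerset, (-1:ℚ)^U.card) = 0 := by
        have hz := Finset.sum_powerset_neg_one_pow_card_of_nonempty hZne
        have := congrArg (fun x : ℤ => (x : ℚ)) hz
        push_cast at this
        exact this
      have hfact : ∀ U ∈ univ.filter (fun U : Finset W => U.Nonempty ∧ ∀ b, σ b ∉ U),
          -((-1:ℚ)^(m+1) * (-1:ℚ)^(U.card)) = -((-1:ℚ)^(m+1)) * (-1:ℚ)^(U.card) := by
        intros; ring
      rw [Finset.sum_congr rfl hfact, ← Finset.mul_sum, hfilter,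
        Finset.sum_erase_eq_sub (Finset.mem_powerset.mpr (Finset.empty_subset Z)), hsumZ,
        Finset.card_empty, pow_zero]
      ring

theorem fiber_card (σ τ : B → W) (q : ℕ) (T : Finset (Fin q)) :
    ((strictSet σ τ q).filter (fun f => Finset.image f univ = T)).card
      = surjCount σ τ T.card := by
  set e := T.orderIsoOfFin rfl with he
  rw [surjCount]
  refine Finset.card_bij'
    (i := fun f hf => fun w : W => e.symm ⟨f w, ?_⟩)
    (j := fun f' hf' => fun w : W => (e (f' w) : Fin q))
    ?_ ?_ ?_ ?_
  case refine_1 =>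
    rw [mem_filter] at hf
    rw [← hf.2]
    exact Finset.mem_image_of_mem f (mem_univ w)
  case refine_2 =>
    intro f hf
    rw [mem_filter, strictSet, mem_filter] at hf
    obtain ⟨⟨-, hstrict⟩, himg⟩ := hf
    rw [mem_filter, strictSet, mem_filter]
    refine ⟨⟨mem_univ _, fun b => ?_⟩, fun j0 => ?_⟩
    · beta_reduce
      rw [OrderIso.lt_iff_lt, Subtype.mk_lt_mk]
      exact hstrict b
    · have hmem : (e j0 : Fin q) ∈ Finset.image f univ := by
        rw [himg]; exact (e j0).2
      obtain ⟨w, -, hw⟩ := Finset.mem_image.mp hmem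
      refine ⟨w, ?_⟩
      beta_reduce
      rw [show (⟨f w, _⟩ : {x // x ∈ T}) = e j0 from Subtype.ext hw, OrderIso.symm_apply_apply]
  case refine_3 =>
    intro f' hf'
    rw [mem_filter, strictSet, mem_filter] at hf'
    obtain ⟨⟨-, hstrict⟩, hsurj⟩ := hf'
    rw [mem_filter, strictSet, mem_filter]
    refine ⟨⟨mem_univ _, fun b => ?_⟩, ?_⟩
    · beta_reduce
      rw [Subtype.coe_lt_coe, OrderIso.lt_iff_lt]
      exact hstrict b
    · apply Finset.Subset.antisymm
      · intro x hx
        obtain ⟨w, -, hw⟩ := Finset.mem_image.mp hx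
        rw [← hw]
        exact (e (f' w)).2
      · intro x hx
        obtain ⟨j0, hj0⟩ := hsurj (e.symm ⟨x, hx⟩)
        rw [Finset.mem_image]
        refine ⟨j0, mem_univ _, ?_⟩
        beta_reduce
        rw [hj0, OrderIso.apply_symm_apply]
  case refine_4 =>
    intro f hf
    funext w
    beta_reduce
    rw [OrderIso.apply_symm_apply]
  case refine_5 =>
    intro f' hf'
    funext w
    beta_reduce
    rw [show (⟨(e (f' w) : Fin q), _⟩ : {x // x ∈ T}) = e (f' w) from Subtype.ext rfl,
      OrderIso.symm_apply_apply]

theorem strictSet_card (σ τ : B → W) (q : ℕ) :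
    ((strictSet σ τ q).card : ℚ) =
      ∑ k ∈ Finset.range (Fintype.card W + 1),
        (surjCount σ τ k : ℚ) * ((q.choose k : ℕ) : ℚ) := by
  have h1 : (strictSet σ τ q).card
      = ∑ T ∈ (univ : Finset (Fin q)).powerset,
          ((strictSet σ τ q).filter (fun f => Finset.image f univ = T)).card :=
    Finset.card_eq_sum_card_fiberwise
      (fun f _ => Finset.mem_powerset.mpr (Finset.subset_univ _))
  have h2 : (strictSet σ τ q).card
      = ∑ T ∈ (univ : Finset (Fin q)).powerset, surjCount σ τ T.card := by
    rw [h1]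
    exact Finset.sum_congr rfl (fun T _ => fiber_card σ τ q T)
  have h3 : ∑ T ∈ (univ : Finset (Fin q)).powerset, surjCount σ τ T.card
      = ∑ k ∈ Finset.range (q+1),
          ∑ T ∈ ((univ : Finset (Fin q)).powerset.filter (fun T => T.card = k)),
            surjCount σ τ T.card := by
    rw [Finset.sum_fiberwise_of_maps_to]
    intro T hT
    rw [Finset.mem_range]
    have := Finset.card_le_univ T
    rw [Fintype.card_fin] at this
    omega
  have h4 : ∀ k, ∑ T ∈ ((univ : Finset (Fin q)).powerset.filter (fun T => T.card = k)),
      surjCount σ τ T.card = q.choose k * surjCount σ τ k := by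
    intro k
    rw [← Finset.powersetCard_eq_filter]
    rw [Finset.sum_congr rfl (fun T hT => by
      rw [(Finset.mem_powersetCard.mp hT).2]), Finset.sum_const,
      Finset.card_powersetCard, Finset.card_univ, Fintype.card_fin, smul_eq_mul]
  have h5 : (strictSet σ τ q).card = ∑ k ∈ Finset.range (q+1), q.choose k * surjCount σ τ k := by
    rw [h2, h3]
    exact Finset.sum_congr rfl (fun k _ => h4 k)
  -- move to ℚ and change the summation range
  set M := max (q + 1) (Fintype.card W + 1) with hM
  have hext1 : ∑ k ∈ Finset.range (q+1), ((q.choose k : ℚ) * (surjCount σ τ k : ℚ))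
      = ∑ k ∈ Finset.range M, ((q.choose k : ℚ) * (surjCount σ τ k : ℚ)) := by
    apply Finset.sum_subset (Finset.range_subset_range.mpr (le_max_left _ _))
    intro k hk hk2
    rw [Finset.mem_range] at hk2
    rw [Nat.choose_eq_zero_of_lt (by omega)]
    norm_num
  have hext2 : ∑ k ∈ Finset.range (Fintype.card W + 1),
        ((surjCount σ τ k : ℚ) * ((q.choose k : ℕ) : ℚ))
      = ∑ k ∈ Finset.range M, ((surjCount σ τ k : ℚ) * ((q.choose k : ℕ) : ℚ)) := by
    apply Finset.sum_subset (Finset.range_subset_range.mpr (le_max_right _ _))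
    intro k hk hk2
    rw [Finset.mem_range] at hk2
    rw [surjCount_eq_zero (by omega)]
    norm_num
  rw [h5, hext2]
  push_cast
  rw [hext1]
  exact Finset.sum_congr rfl (fun k _ => by ring)

theorem descPochhammer_eval_neg_one (k : ℕ) :
    (descPochhammer ℚ k).eval (-1 : ℚ) = (-1)^k * (k.factorial : ℚ) := by
  induction k with
  | zero => simp [descPochhammer_zero]
  | succ k ih =>
    rw [descPochhammer_succ_right, Polynomial.eval_mul, ih, Polynomial.eval_sub,
      Polynomial.eval_X, Polynomial.eval_natCast, Nat.factorial_succ]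
    push_cast
    ring

noncomputable def countPoly (σ τ : B → W) : Polynomial ℚ :=
  ∑ k ∈ Finset.range (Fintype.card W + 1),
    Polynomial.C ((surjCount σ τ k : ℚ) / (k.factorial : ℚ)) * descPochhammer ℚ k

theorem countPoly_eval_nat (σ τ : B → W) (q : ℕ) :
    (countPoly σ τ).eval (q : ℚ) = ((strictSet σ τ q).card : ℚ) := by
  rw [countPoly, Polynomial.eval_finset_sum, strictSet_card]
  refine Finset.sum_congr rfl (fun k _ => ?_)
  rw [Polynomial.eval_mul, Polynomial.eval_C, descPochhammer_eval_eq_descFactorial,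
    Nat.descFactorial_eq_factorial_mul_choose]
  have hk : (k.factorial : ℚ) ≠ 0 := Nat.cast_ne_zero.mpr (Nat.factorial_ne_zero k)
  push_cast
  field_simp

theorem countPoly_eval_neg_one (σ τ : B → W) :
    (countPoly σ τ).eval (-1 : ℚ) =
      ∑ k ∈ Finset.range (Fintype.card W + 1), (-1:ℚ)^k * (surjCount σ τ k : ℚ) := by
  rw [countPoly, Polynomial.eval_finset_sum]
  refine Finset.sum_congr rfl (fun k _ => ?_)
  rw [Polynomial.eval_mul, Polynomial.eval_C, descPochhammer_eval_neg_one]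
  have hk : (k.factorial : ℚ) ≠ 0 := Nat.cast_ne_zero.mpr (Nat.factorial_ne_zero k)
  field_simp

theorem countPoly_eval_neg_one_acyclic {σ τ : B → W} (h : ¬ HasDicycle σ τ) :
    (countPoly σ τ).eval (-1 : ℚ) = (-1)^(Fintype.card W) := by
  rw [countPoly_eval_neg_one]
  exact alternating_sum (Fintype.card W) W B σ τ rfl h

theorem countPoly_eval_neg_one_cyclic {σ τ : B → W} (h : HasDicycle σ τ) :
    (countPoly σ τ).eval (-1 : ℚ) = 0 := by
  rw [countPoly_eval_neg_one]
  apply Finset.sum_eq_zero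
  intro k _
  have : surjCount σ τ k = 0 := by
    rw [surjCount, strictSet_eq_empty_of_dicycle h, Finset.filter_empty, Finset.card_empty]
  rw [this]
  norm_num

section Expand

variable {V A : Type} [Fintype V] [DecidableEq V] [Fintype A] [DecidableEq A]
variable (s t : A → V) (y z : ℚ)

/-- generic product-splitting helper -/
theorem prod_three_split (p1 p2 : A → Prop) [DecidablePred p1] [DecidablePred p2]
    (hdisj : ∀ a, ¬(p1 a ∧ p2 a)) (u v : ℚ) :
    ∏ a : A, (if p1 a then u else if p2 a then v else 1)
      = u ^ (univ.filter p1).card * v ^ (univ.filter p2).card := by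
  rw [← Finset.prod_filter_mul_prod_filter_not univ p1]
  congr 1
  · rw [Finset.prod_congr rfl (fun a ha => if_pos (mem_filter.mp ha).2),
      Finset.prod_const]
  · rw [← Finset.prod_filter_mul_prod_filter_not (univ.filter (fun a => ¬ p1 a)) p2]
    have hp2 : (univ.filter (fun a => ¬ p1 a)).filter p2 = univ.filter p2 := by
      rw [Finset.filter_filter]
      apply Finset.filter_congr
      intro a _
      constructor
      · rintro ⟨-, h⟩; exact h
      · intro h; exact ⟨fun h1 => hdisj a ⟨h1, h⟩, h⟩
    have h1 : ∏ a ∈ (univ.filter (fun a => ¬ p1 a)).filter p2,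
        (if p1 a then u else if p2 a then v else 1) = v ^ (univ.filter p2).card := by
      rw [Finset.prod_congr rfl (fun a ha => ?_), Finset.prod_const, hp2]
      rw [Finset.mem_filter, Finset.mem_filter] at ha
      rw [if_neg ha.1.2, if_pos ha.2]
    have h2 : ∏ a ∈ (univ.filter (fun a => ¬ p1 a)).filter (fun a => ¬ p2 a),
        (if p1 a then u else if p2 a then v else 1) = 1 := by
      apply Finset.prod_eq_one
      intro a ha
      rw [Finset.mem_filter, Finset.mem_filter] at ha
      rw [if_neg ha.1.2, if_neg ha.2]
    rw [h1, h2, mul_one]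

noncomputable def colWeight (q : ℕ) (f : V → Fin q) (a : A) : Fin 3 → ℚ := fun i =>
  if i = 1 then (if f (s a) < f (t a) then y else 0)
  else if i = 2 then (if f (t a) < f (s a) then z else 0)
  else 1

theorem cond_iff (q : ℕ) (g : A → Fin 3) (f : V → Fin q) :
    (∀ b : {a : A // g a ≠ 0},
        f (if g b.1 = 2 then t b.1 else s b.1) < f (if g b.1 = 2 then s b.1 else t b.1))
      ↔ ∀ a, (g a = 1 → f (s a) < f (t a)) ∧ (g a = 2 → f (t a) < f (s a)) := by
  have h3 : ∀ x : Fin 3, x = 0 ∨ x = 1 ∨ x = 2 := by decide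
  constructor
  · intro h a
    constructor
    · intro h1
      have := h ⟨a, by rw [h1]; decide⟩
      rwa [if_neg (by rw [h1]; decide), if_neg (by rw [h1]; decide)] at this
    · intro h2
      have := h ⟨a, by rw [h2]; decide⟩
      rwa [if_pos h2, if_pos h2] at this
  · intro h b
    rcases h3 (g b.1) with h0 | h1 | h2
    · exact absurd h0 b.2
    · rw [if_neg (by rw [h1]; decide), if_neg (by rw [h1]; decide)]
      exact (h b.1).1 h1
    · rw [if_pos h2, if_pos h2]
      exact (h b.1).2 h2

theorem per_f (q : ℕ) (f : V → Fin q) :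
    (1+y) ^ (univ.filter (fun a => f (s a) < f (t a))).card *
      (1+z) ^ (univ.filter (fun a => f (t a) < f (s a))).card
    = ∑ g : A → Fin 3, ∏ a : A, colWeight s t y z q f a (g a) := by
  have hpi : ∑ g ∈ Fintype.piFinset (fun _ : A => (univ : Finset (Fin 3))),
      ∏ a : A, colWeight s t y z q f a (g a)
      = ∏ a : A, ∑ i : Fin 3, colWeight s t y z q f a i :=
    (Finset.prod_univ_sum _ _).symm
  rw [show (univ : Finset (A → Fin 3)) = Fintype.piFinset (fun _ : A => univ) from
    (Fintype.piFinset_univ).symm, hpi]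
  have hsum : ∀ a : A, ∑ i : Fin 3, colWeight s t y z q f a i
      = (if f (s a) < f (t a) then 1+y else if f (t a) < f (s a) then 1+z else 1) := by
    intro a
    rw [Fin.sum_univ_three]
    have e0 : colWeight s t y z q f a 0 = 1 := by simp [colWeight]
    have e1 : colWeight s t y z q f a 1 = (if f (s a) < f (t a) then y else 0) := by
      simp [colWeight]
    have e2 : colWeight s t y z q f a 2 = (if f (t a) < f (s a) then z else 0) := by
      simp [colWeight]
    rw [e0, e1, e2]
    by_cases h1 : f (s a) < f (t a)
    · have h2 : ¬ f (t a) < f (s a) := lt_asymm h1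
      simp [h1, h2]
    · by_cases h2 : f (t a) < f (s a) <;> simp [h1, h2]
  rw [Finset.prod_congr rfl (fun a _ => hsum a)]
  rw [prod_three_split (fun a => f (s a) < f (t a)) (fun a => f (t a) < f (s a))
    (fun a h => by
      have h1 : f (s a) < f (t a) := h.1
      have h2 : f (t a) < f (s a) := h.2
      exact lt_asymm h1 h2) (1+y) (1+z)]

theorem per_g (q : ℕ) (g : A → Fin 3) :
    ∑ f : V → Fin q, ∏ a : A, colWeight s t y z q f a (g a)
      = y ^ (univ.filter (fun a => g a = 1)).card *
        z ^ (univ.filter (fun a => g a = 2)).card *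
        ((strictSet (fun b : {a : A // g a ≠ 0} => if g b.1 = 2 then t b.1 else s b.1)
          (fun b : {a : A // g a ≠ 0} => if g b.1 = 2 then s b.1 else t b.1) q).card : ℚ) := by
  have hterm : ∀ f : V → Fin q, ∏ a : A, colWeight s t y z q f a (g a)
      = if (∀ b : {a : A // g a ≠ 0},
            f (if g b.1 = 2 then t b.1 else s b.1) < f (if g b.1 = 2 then s b.1 else t b.1))
        then y ^ (univ.filter (fun a => g a = 1)).card *
             z ^ (univ.filter (fun a => g a = 2)).card
        else 0 := by
    intro f
    by_cases hc : ∀ b : {a : A // g a ≠ 0},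
        f (if g b.1 = 2 then t b.1 else s b.1) < f (if g b.1 = 2 then s b.1 else t b.1)
    · rw [if_pos hc]
      have h' := (cond_iff s t q g f).mp hc
      have h3 : ∀ x : Fin 3, x = 0 ∨ x = 1 ∨ x = 2 := by decide
      have hcongr : ∀ a : A, colWeight s t y z q f a (g a)
          = (if g a = 1 then y else if g a = 2 then z else 1) := by
        intro a
        rcases h3 (g a) with h0 | h1 | h2
        · rw [h0]; simp [colWeight]
        · rw [h1]; simp [colWeight, (h' a).1 h1]
        · rw [h2]; simp [colWeight, (h' a).2 h2]
      rw [Finset.prod_congr rfl (fun a _ => hcongr a)]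
      exact prod_three_split (fun a => g a = 1) (fun a => g a = 2)
        (fun a h => by
          have h1 : g a = 1 := h.1
          have h2 : g a = 2 := h.2
          rw [h1] at h2
          exact absurd h2 (by decide)) y z
    · rw [if_neg hc]
      rw [cond_iff s t q g f] at hc
      obtain ⟨a, ha⟩ := not_forall.mp hc
      apply Finset.prod_eq_zero (Finset.mem_univ a)
      have h3 : ∀ x : Fin 3, x = 0 ∨ x = 1 ∨ x = 2 := by decide
      rcases h3 (g a) with h0 | h1 | h2
      · exact absurd ⟨fun h1' => absurd (h0.symm.trans h1') (by decide),
          fun h2' => absurd (h0.symm.trans h2') (by decide)⟩ ha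
      · have hna : ¬ f (s a) < f (t a) := fun hasc =>
          ha ⟨fun _ => hasc, fun h2' => absurd (h1.symm.trans h2') (by decide)⟩
        rw [h1]
        simp [colWeight, hna]
      · have hnd : ¬ f (t a) < f (s a) := fun hdesc =>
          ha ⟨fun h1' => absurd (h2.symm.trans h1') (by decide), fun _ => hdesc⟩
        rw [h2]
        simp [colWeight, hnd]
  rw [Finset.sum_congr rfl (fun f _ => hterm f)]
  rw [Finset.sum_ite, Finset.sum_const, Finset.sum_const_zero, add_zero]
  have hss : strictSet
      (fun b : {a : A // g a ≠ 0} => if g b.1 = 2 then t b.1 else s b.1)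
      (fun b : {a : A // g a ≠ 0} => if g b.1 = 2 then s b.1 else t b.1) q
      = univ.filter (fun f : V → Fin q => ∀ b : {a : A // g a ≠ 0},
          f (if g b.1 = 2 then t b.1 else s b.1) < f (if g b.1 = 2 then s b.1 else t b.1)) :=
    rfl
  rw [hss, nsmul_eq_mul, mul_comm]

theorem expand (q : ℕ) :
    colorSum V A s t q (1+y) (1+z)
      = ∑ g : A → Fin 3,
          y ^ (univ.filter (fun a => g a = 1)).card *
          z ^ (univ.filter (fun a => g a = 2)).card *
          ((strictSet (fun b : {a : A // g a ≠ 0} => if g b.1 = 2 then t b.1 else s b.1)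
            (fun b : {a : A // g a ≠ 0} => if g b.1 = 2 then s b.1 else t b.1) q).card : ℚ) := by
  rw [colorSum]
  rw [Finset.sum_congr rfl (fun f _ => per_f s t y z q f)]
  rw [Finset.sum_comm]
  exact Finset.sum_congr rfl (fun g _ => per_g s t y z q g)

end Expand

end B10

/-- for a digraph `D = (V,A)`,
`Σ y^{|S|} z^{|T|} = (−1)^{|V|} · B_D(−1, 1+y, 1+z)`, the sum being over all ordered
partitions `A = R ⊎ S ⊎ T` (encoded by `g : A → Fin 3`, `R = g⁻¹(0)`, `S = g⁻¹(1)`,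
`T = g⁻¹(2)`) such that the digraph obtained from `D` by deleting the arcs of `R` and
reversing the arcs of `T` is acyclic. -/
theorem B_at_minus_one_counts_acyclic_deletions_reorientations
    (V A : Type) [Fintype V] [DecidableEq V] [Fintype A] [DecidableEq A]
    (s t : A → V)
    (B : MvPolynomial (Fin 3) ℚ)
    (hB : ∀ q : ℕ, 0 < q → ∀ y z : ℚ,
      MvPolynomial.eval ![(q : ℚ), y, z] B = colorSum V A s t q y z) :
    ∀ y z : ℚ,
      ∑ g ∈ (Finset.univ : Finset (A → Fin 3)).filter
          (fun g => ¬ HasDicycle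
            (fun b : {a : A // g a ≠ 0} => if g b.1 = 2 then t b.1 else s b.1)
            (fun b : {a : A // g a ≠ 0} => if g b.1 = 2 then s b.1 else t b.1)),
        y ^ (Finset.univ.filter (fun a => g a = 1)).card *
        z ^ (Finset.univ.filter (fun a => g a = 2)).card
      = (-1 : ℚ) ^ (Fintype.card V) *
        MvPolynomial.eval ![(-1 : ℚ), 1 + y, 1 + z] B := by
  intro y z
  set v : Fin 3 → Polynomial ℚ := ![Polynomial.X, Polynomial.C (1+y), Polynomial.C (1+z)]
    with hv
  set p1 : Polynomial ℚ := MvPolynomial.aeval v B with hp1def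
  have haeval : ∀ (u : Fin 3 → ℚ), MvPolynomial.aeval u B = MvPolynomial.eval u B := by
    intro u
    rw [MvPolynomial.aeval_def, MvPolynomial.eval, Algebra.algebraMap_self]
    rfl
  have hp1 : ∀ x : ℚ, p1.eval x = MvPolynomial.eval ![x, 1+y, 1+z] B := by
    intro x
    have hcomp := MvPolynomial.comp_aeval (R := ℚ) (f := v)
      (φ := (Polynomial.aeval x : Polynomial ℚ →ₐ[ℚ] ℚ))
    have happ := congrArg (fun ψ : MvPolynomial (Fin 3) ℚ →ₐ[ℚ] ℚ => ψ B) hcomp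
    simp only [AlgHom.comp_apply] at happ
    have hL : (Polynomial.aeval x : Polynomial ℚ →ₐ[ℚ] ℚ) p1 = p1.eval x :=
      congrFun (Polynomial.coe_aeval_eq_eval x) p1
    have hfun : (fun i => (Polynomial.aeval x : Polynomial ℚ →ₐ[ℚ] ℚ) (v i))
        = ![x, 1+y, 1+z] := by
      funext i
      fin_cases i <;> simp [hv]
    rw [← hL, hp1def, happ, hfun, haeval]
  set p2 : Polynomial ℚ := ∑ g : A → Fin 3,
      Polynomial.C (y ^ (univ.filter (fun a => g a = 1)).card *
        z ^ (univ.filter (fun a => g a = 2)).card) *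
      B10.countPoly (fun b : {a : A // g a ≠ 0} => if g b.1 = 2 then t b.1 else s b.1)
        (fun b : {a : A // g a ≠ 0} => if g b.1 = 2 then s b.1 else t b.1) with hp2def
  have hp2eval : ∀ x : ℚ, p2.eval x = ∑ g : A → Fin 3,
      (y ^ (univ.filter (fun a => g a = 1)).card *
        z ^ (univ.filter (fun a => g a = 2)).card) *
      (B10.countPoly (fun b : {a : A // g a ≠ 0} => if g b.1 = 2 then t b.1 else s b.1)
        (fun b : {a : A // g a ≠ 0} => if g b.1 = 2 then s b.1 else t b.1)).eval x := by
    intro x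
    rw [hp2def, Polynomial.eval_finset_sum]
    exact Finset.sum_congr rfl (fun g _ => by rw [Polynomial.eval_mul, Polynomial.eval_C])
  have hagree : ∀ q : ℕ, 0 < q → p1.eval (q : ℚ) = p2.eval (q : ℚ) := by
    intro q hq
    rw [hp1, hB q hq (1+y) (1+z), B10.expand s t y z q, hp2eval]
    exact Finset.sum_congr rfl (fun g _ => by rw [B10.countPoly_eval_nat])
  have hpeq : p1 = p2 := by
    apply Polynomial.eq_of_infinite_eval_eq
    apply Set.infinite_of_injective_forall_mem (f := fun n : ℕ => ((n+1 : ℕ) : ℚ))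
    · intro a b hab
      simp only [Nat.cast_inj] at hab
      omega
    · intro n
      exact hagree (n+1) (Nat.succ_pos n)
  rw [← hp1 (-1), hpeq, hp2eval, Finset.mul_sum, Finset.sum_filter]
  apply Finset.sum_congr rfl
  intro g _
  by_cases hg : HasDicycle
      (fun b : {a : A // g a ≠ 0} => if g b.1 = 2 then t b.1 else s b.1)
      (fun b : {a : A // g a ≠ 0} => if g b.1 = 2 then s b.1 else t b.1)
  · rw [if_neg (not_not.mpr hg), B10.countPoly_eval_neg_one_cyclic hg, mul_zero, mul_zero]
  · rw [if_pos hg, B10.countPoly_eval_neg_one_acyclic hg]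
    have hsq : ((-1:ℚ) ^ Fintype.card V) * ((-1:ℚ) ^ Fintype.card V) = 1 := by
      rw [← pow_add, show Fintype.card V + Fintype.card V = 2 * Fintype.card V by omega,
        pow_mul, neg_one_sq, one_pow]
    calc y ^ (univ.filter (fun a => g a = 1)).card * z ^ (univ.filter (fun a => g a = 2)).card
        = (((-1:ℚ) ^ Fintype.card V) * ((-1:ℚ) ^ Fintype.card V)) *
          (y ^ (univ.filter (fun a => g a = 1)).card *
            z ^ (univ.filter (fun a => g a = 2)).card) := by rw [hsq, one_mul]
      _ = _ := by ring
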